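/- Let r > 0 be real and α, β ∈ ℂ. If e^{−rα²} = 2 and e^{−rβ²} = 2, then e^{−r(α+β)²} ≠ 2. -/

import Mathlib

lemma re_eq_log_of_exp_eq_two (z : ℂ) (h : Complex.exp z = 2) : z.re = Real.log 2 := by
  have := congrArg (‖·‖) h
  rw [Complex.norm_exp] at this
  simp at this
  rw [← this, Real.log_exp]

/-- The spectral set {α : e^{−rα²} = 2} of the p-adic particle (p = 2) is sum-free:
the sum of two spectral roots is never a spectral root. -/
theorem stmt18 (r : ℝ) (hr : 0 < r) (α β : ℂ)
    (hα : Complex.exp (-(r : ℂ) * α ^ 2) = 2)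
    (hβ : Complex.exp (-(r : ℂ) * β ^ 2) = 2) :
    Complex.exp (-(r : ℂ) * (α + β) ^ 2) ≠ 2 := by
  intro hγ
  have h1 := re_eq_log_of_exp_eq_two _ hα
  have h2 := re_eq_log_of_exp_eq_two _ hβ
  have h3 := re_eq_log_of_exp_eq_two _ hγ
  set a := α.re; set b := α.im; set c := β.re; set d := β.im
  have hL : 0 < Real.log 2 := Real.log_pos (by norm_num)
  simp only [Complex.mul_re, Complex.neg_re, Complex.neg_im, Complex.ofReal_re,
    Complex.ofReal_im, Complex.add_re, Complex.add_im, pow_two, Complex.mul_im] at h1 h2 h3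
  set L := Real.log 2
  nlinarith [sq_nonneg (2*a + c), sq_nonneg c, sq_nonneg (a*d - b*c), sq_nonneg (a*d + b*c),
    mul_pos hr hL, sq_nonneg (b*d - a*c), mul_pos (mul_pos hr hr) hL, sq_nonneg (a+c),
    sq_nonneg (b+d), mul_pos hr (mul_pos hr hL)]
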